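/- For the standard logistic density g(u) = e^{-u}/(1+e^{-u})², the limit of |g'(u)/g(u)| as u → ±∞ equals 1, hence is finite; but |u · g'(u)/g(u)| tends to +∞ as u → ±∞. -/

import Mathlib

open Filter Topology

private lemma hx_pos (u : ℝ) : (0:ℝ) < 1 + Real.exp (-u) := by positivity

private lemma ratio_eq (g : ℝ → ℝ)
    (hg : ∀ u, g u = Real.exp (-u) / (1 + Real.exp (-u)) ^ 2) (u : ℝ) :
    deriv g u / g u = (Real.exp (-u) - 1) / (1 + Real.exp (-u)) := by
  have hgf : g = fun u => Real.exp (-u) / (1 + Real.exp (-u)) ^ 2 := funext hg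
  subst hgf
  set e := Real.exp (-u) with he
  have hepos : 0 < e := Real.exp_pos _
  have hx : (0:ℝ) < 1 + e := hx_pos u
  have h1 : HasDerivAt (fun u : ℝ => Real.exp (-u)) (-Real.exp (-u)) u := by
    have h := (Real.hasDerivAt_exp (-u)).comp u (hasDerivAt_neg u)
    simp at h
    exact h
  have h2 : HasDerivAt (fun u : ℝ => (1 + Real.exp (-u)) ^ 2)
      (2 * (1 + Real.exp (-u)) ^ 1 * (-Real.exp (-u))) u := by
    have h := ((hasDerivAt_const u (1:ℝ)).add h1).pow 2
    simp at h ⊢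
    exact h
  have hD : HasDerivAt (fun u : ℝ => Real.exp (-u) / (1 + Real.exp (-u)) ^ 2)
      (e * (e - 1) / (1 + e) ^ 3) u := by
    have h3 := h1.fun_div h2 (by positivity)
    refine h3.congr_deriv ?_
    rw [← he]
    field_simp
    ring
  rw [hD.deriv]
  show e * (e - 1) / (1 + e) ^ 3 / (Real.exp (-u) / (1 + Real.exp (-u)) ^ 2) = (e - 1) / (1 + e)
  rw [← he]
  field_simp

/-- For the standard logistic density `g(u) = e^{-u}/(1+e^{-u})²`, the limit of
`|g'(u)/g(u)|` as `u → ±∞` equals `1` (hence is finite), but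
`|u · g'(u)/g(u)|` tends to `+∞` as `u → ±∞`. -/
theorem logistic_density_score_limits
    (g : ℝ → ℝ) (hg : ∀ u, g u = Real.exp (-u) / (1 + Real.exp (-u)) ^ 2) :
    (Tendsto (fun u => |deriv g u / g u|) atTop (𝓝 1) ∧
     Tendsto (fun u => |deriv g u / g u|) atBot (𝓝 1)) ∧
    (Tendsto (fun u => |u * deriv g u / g u|) atTop atTop ∧
     Tendsto (fun u => |u * deriv g u / g u|) atBot atTop) := by
  have hr : ∀ u, deriv g u / g u = (Real.exp (-u) - 1) / (1 + Real.exp (-u)) :=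
    ratio_eq g hg
  -- alternative form good at atBot
  have hr' : ∀ u, deriv g u / g u = (1 - Real.exp u) / (Real.exp u + 1) := by
    intro u
    rw [hr u]
    have h : Real.exp (-u) = (Real.exp u)⁻¹ := Real.exp_neg u
    have hpos : 0 < Real.exp u := Real.exp_pos u
    rw [h]
    field_simp
  -- atTop limit of |ratio|
  have hexpTop : Tendsto (fun u : ℝ => Real.exp (-u)) atTop (𝓝 0) :=
    Real.tendsto_exp_atBot.comp tendsto_neg_atTop_atBot
  have hexpBot : Tendsto (fun u : ℝ => Real.exp u) atBot (𝓝 0) :=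
    Real.tendsto_exp_atBot
  have hTop : Tendsto (fun u => |deriv g u / g u|) atTop (𝓝 1) := by
    have : Tendsto (fun u => (Real.exp (-u) - 1) / (1 + Real.exp (-u))) atTop (𝓝 (-1)) := by
      have h := ((hexpTop.sub_const 1).div (hexpTop.const_add 1) (by norm_num))
      simp at h
      exact h
    have := this.abs
    simp only [hr]
    simpa using this
  have hBot : Tendsto (fun u => |deriv g u / g u|) atBot (𝓝 1) := by
    have : Tendsto (fun u => (1 - Real.exp u) / (Real.exp u + 1)) atBot (𝓝 1) := by
      have h := ((hexpBot.const_sub 1).div (hexpBot.add_const 1) (by norm_num))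
      simp at h
      exact h
    have := this.abs
    simp only [hr']
    simpa using this
  have habs : ∀ u : ℝ, |u * deriv g u / g u| = |u| * |deriv g u / g u| := by
    intro u
    rw [mul_div_assoc, abs_mul]
  refine ⟨⟨hTop, hBot⟩, ?_, ?_⟩
  · simp only [habs]
    exact tendsto_abs_atTop_atTop.atTop_mul_pos one_pos hTop
  · simp only [habs]
    exact tendsto_abs_atBot_atTop.atTop_mul_pos one_pos hBot
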